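/- With O_g(n) = (1/n)Σ_{d|n} μ(n/d)(2^d - 1) (the number of closed orbits of length n for the circle doubling map), one has Σ_{n ≤ X} O_g(2n) ~ (2/3)·4^X / X as X → ∞. -/

import Mathlib

open Filter Asymptotics Finset

noncomputable def Tfun (n : ℕ) : ℝ :=
  (1 / ((2 * n : ℕ) : ℝ)) * ∑ d ∈ (2 * n).divisors,
    (ArithmeticFunction.moebius ((2 * n) / d) : ℝ) * ((2 : ℝ) ^ d - 1)

noncomputable def bfun (X : ℕ) : ℝ := (2 / 3) * (4 : ℝ) ^ X / (X : ℝ)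

noncomputable def dfun (n : ℕ) : ℝ := bfun n - bfun (n - 1)

noncomputable def gfun (n : ℕ) : ℝ := (4 : ℝ) ^ n / (2 * (n : ℝ))

lemma bfun_zero : bfun 0 = 0 := by simp [bfun]

lemma Tfun_zero : Tfun 0 = 0 := by simp [Tfun]

lemma sum_range_dfun (n : ℕ) : ∑ i ∈ range n, dfun i = bfun (n - 1) := by
  induction n with
  | zero => simp [bfun_zero]
  | succ m ih =>
      rw [Finset.sum_range_succ, ih]
      cases m with
      | zero => simp [dfun, bfun_zero]
      | succ k => simp [dfun]

lemma dfun_eq {n : ℕ} (hn : 2 ≤ n) :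
    dfun n = (4 : ℝ) ^ n * (3 * (n : ℝ) - 4) / (6 * ((n : ℝ) * ((n : ℝ) - 1))) := by
  have h1 : (1 : ℕ) ≤ n := by omega
  have hx : (2 : ℝ) ≤ (n : ℝ) := by exact_mod_cast hn
  have hx0 : (n : ℝ) ≠ 0 := by positivity
  have hx1 : (n : ℝ) - 1 ≠ 0 := by nlinarith
  have hcast : ((n - 1 : ℕ) : ℝ) = (n : ℝ) - 1 := by
    push_cast [h1]; ring
  have hpow : (4 : ℝ) ^ n = (4 : ℝ) ^ (n - 1) * 4 := by
    conv_lhs => rw [show n = (n - 1) + 1 by omega]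
    rw [pow_succ]
  unfold dfun bfun
  rw [hcast, hpow]
  field_simp
  ring

lemma gfun_sub_dfun {n : ℕ} (hn : 2 ≤ n) :
    gfun n - dfun n = (4 : ℝ) ^ n / (6 * ((n : ℝ) * ((n : ℝ) - 1))) := by
  have hx : (2 : ℝ) ≤ (n : ℝ) := by exact_mod_cast hn
  have hx0 : (n : ℝ) ≠ 0 := by positivity
  have hx1 : (n : ℝ) - 1 ≠ 0 := by nlinarith
  rw [dfun_eq hn]
  unfold gfun
  field_simp
  ring

lemma dfun_nonneg (n : ℕ) : 0 ≤ dfun n := by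
  match n with
  | 0 => simp [dfun, bfun_zero]
  | 1 => norm_num [dfun, bfun, bfun_zero]
  | (k + 2) =>
      rw [dfun_eq (by omega)]
      have hx : (2 : ℝ) ≤ ((k + 2 : ℕ) : ℝ) := by exact_mod_cast Nat.le_add_left 2 k
      apply div_nonneg
      · nlinarith [pow_pos (by norm_num : (0:ℝ) < 4) (k + 2)]
      · nlinarith

lemma dfun_pos {n : ℕ} (hn : 2 ≤ n) : 0 < dfun n := by
  rw [dfun_eq hn]
  have hx : (2 : ℝ) ≤ (n : ℝ) := by exact_mod_cast hn
  apply div_pos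
  · nlinarith [pow_pos (by norm_num : (0:ℝ) < 4) n]
  · nlinarith

lemma gd_littleo : (fun n => gfun n - dfun n) =o[atTop] dfun := by
  rw [isLittleO_iff_tendsto' (by
    filter_upwards [eventually_ge_atTop 2] with n hn h
    exact absurd h (dfun_pos hn).ne')]
  have hcongr : ∀ᶠ n : ℕ in atTop,
      (1 : ℝ) / (3 * (n : ℝ) - 4) = (gfun n - dfun n) / dfun n := by
    filter_upwards [eventually_ge_atTop 2] with n hn
    have hx : (2 : ℝ) ≤ (n : ℝ) := by exact_mod_cast hn
    have hx0 : (n : ℝ) ≠ 0 := by positivity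
    have hx1 : (n : ℝ) - 1 ≠ 0 := by nlinarith
    have h34 : 3 * (n : ℝ) - 4 ≠ 0 := by nlinarith
    rw [gfun_sub_dfun hn, dfun_eq hn]
    have h4 : (0:ℝ) < (4:ℝ) ^ n := pow_pos (by norm_num) n
    rw [div_div_div_cancel_right₀]
    · field_simp
    · positivity
  refine Tendsto.congr' hcongr ?_
  have h : Tendsto (fun n : ℕ => 3 * (n : ℝ) - 4) atTop atTop :=
    tendsto_atTop_add_const_right _ _ ((tendsto_natCast_atTop_atTop).const_mul_atTop (by norm_num))
  simpa [one_div, Pi.inv_def] using h.inv_tendsto_atTop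

lemma Tg_bound {n : ℕ} (hn : 1 ≤ n) : |Tfun n - gfun n| ≤ 2 * (2 : ℝ) ^ n := by
  have hN0 : 2 * n ≠ 0 := by omega
  have hmem : 2 * n ∈ (2 * n).divisors := Nat.mem_divisors_self _ hN0
  set E : ℝ := ∑ d ∈ ((2 * n).divisors).erase (2 * n),
      (ArithmeticFunction.moebius ((2 * n) / d) : ℝ) * ((2 : ℝ) ^ d - 1) with hE
  have hx : (1 : ℝ) ≤ (n : ℝ) := by exact_mod_cast hn
  have hx0 : (0 : ℝ) < 2 * (n : ℝ) := by linarith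
  have hpow : (2 : ℝ) ^ (2 * n) = (4 : ℝ) ^ n := by
    rw [pow_mul]; norm_num
  have hsplit : ∑ d ∈ (2 * n).divisors,
      (ArithmeticFunction.moebius ((2 * n) / d) : ℝ) * ((2 : ℝ) ^ d - 1)
      = E + ((4 : ℝ) ^ n - 1) := by
    rw [← Finset.sum_erase_add _ _ hmem, Nat.div_self (Nat.pos_of_ne_zero hN0)]
    simp [hpow, hE]
  have hkey : Tfun n - gfun n = (E - 1) / (2 * (n : ℝ)) := by
    unfold Tfun gfun
    rw [hsplit]
    push_cast
    field_simp
    ring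
  -- bound on E
  have hterm : ∀ d ∈ ((2 * n).divisors).erase (2 * n),
      |(ArithmeticFunction.moebius ((2 * n) / d) : ℝ) * ((2 : ℝ) ^ d - 1)| ≤ (2 : ℝ) ^ n := by
    intro d hd
    rw [Finset.mem_erase] at hd
    obtain ⟨hdne, hddvd⟩ := hd
    obtain ⟨hdvd, -⟩ := Nat.mem_divisors.mp hddvd
    obtain ⟨k, hk⟩ := hdvd
    have hk2 : 2 ≤ k := by
      rcases Nat.lt_or_ge k 2 with h | h
      · interval_cases k <;> omega
      · exact h
    have hdn : d ≤ n := by nlinarith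
    have h1 : |(ArithmeticFunction.moebius ((2 * n) / d) : ℝ)| ≤ 1 := by
      have := ArithmeticFunction.abs_moebius_le_one (n := (2 * n) / d)
      calc |(ArithmeticFunction.moebius ((2 * n) / d) : ℝ)|
          = ((|ArithmeticFunction.moebius ((2 * n) / d)| : ℤ) : ℝ) := by
            rw [Int.cast_abs]
        _ ≤ 1 := by exact_mod_cast this
    have h2 : |(2 : ℝ) ^ d - 1| ≤ (2 : ℝ) ^ n := by
      have : (1:ℝ) ≤ (2:ℝ) ^ d := one_le_pow₀ (by norm_num)
      rw [abs_of_nonneg (by linarith : (0:ℝ) ≤ (2:ℝ) ^ d - 1)]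
      calc (2 : ℝ) ^ d - 1 ≤ (2 : ℝ) ^ d := by linarith
        _ ≤ (2 : ℝ) ^ n := by
            exact pow_le_pow_right₀ (by norm_num) hdn
    calc |(ArithmeticFunction.moebius ((2 * n) / d) : ℝ) * ((2 : ℝ) ^ d - 1)|
        = |(ArithmeticFunction.moebius ((2 * n) / d) : ℝ)| * |(2 : ℝ) ^ d - 1| := abs_mul _ _
      _ ≤ 1 * (2 : ℝ) ^ n := by
          apply mul_le_mul h1 h2 (abs_nonneg _) zero_le_one
      _ = (2 : ℝ) ^ n := one_mul _
  have hcard : (((2 * n).divisors).erase (2 * n)).card ≤ 2 * n := by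
    calc (((2 * n).divisors).erase (2 * n)).card
        ≤ ((2 * n).divisors).card := Finset.card_le_card (Finset.erase_subset _ _)
      _ ≤ (Finset.Icc 1 (2 * n)).card := by
          apply Finset.card_le_card
          intro d hd
          exact Finset.mem_Icc.mpr ⟨Nat.pos_of_mem_divisors hd, Nat.divisor_le hd⟩
      _ = 2 * n := by rw [Nat.card_Icc]; omega
  have hEbound : |E| ≤ 2 * (n : ℝ) * (2 : ℝ) ^ n := by
    calc |E| ≤ ∑ d ∈ ((2 * n).divisors).erase (2 * n),
        |(ArithmeticFunction.moebius ((2 * n) / d) : ℝ) * ((2 : ℝ) ^ d - 1)| :=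
          Finset.abs_sum_le_sum_abs _ _
      _ ≤ ∑ _d ∈ ((2 * n).divisors).erase (2 * n), (2 : ℝ) ^ n :=
          Finset.sum_le_sum hterm
      _ = ((((2 * n).divisors).erase (2 * n)).card : ℝ) * (2 : ℝ) ^ n := by
          rw [Finset.sum_const, nsmul_eq_mul]
      _ ≤ 2 * (n : ℝ) * (2 : ℝ) ^ n := by
          have : ((((2 * n).divisors).erase (2 * n)).card : ℝ) ≤ 2 * (n : ℝ) := by
            exact_mod_cast hcard
          have h2 : (0:ℝ) ≤ (2:ℝ) ^ n := by positivity
          nlinarith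
  rw [hkey, abs_div, abs_of_pos hx0, div_le_iff₀ hx0]
  have habs : |E - 1| ≤ |E| + 1 := by
    calc |E - 1| ≤ |E| + |(1:ℝ)| := abs_sub _ _
      _ = |E| + 1 := by norm_num
  have hp1 : (1:ℝ) ≤ (2:ℝ) ^ n := one_le_pow₀ (by norm_num)
  nlinarith

lemma two_pow_littleo : (fun n : ℕ => (2 : ℝ) ^ n) =o[atTop] dfun := by
  have h1 : (fun n : ℕ => (2 : ℝ) ^ n) =o[atTop]
      (fun n : ℕ => (4 : ℝ) ^ n / (6 * (n : ℝ))) := by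
    rw [isLittleO_iff_tendsto' ?hz]
    case hz =>
      filter_upwards [eventually_ge_atTop 1] with n hn h
      exfalso
      have hx : (1 : ℝ) ≤ (n : ℝ) := by exact_mod_cast hn
      have : (0:ℝ) < (4:ℝ) ^ n / (6 * (n:ℝ)) := by positivity
      linarith [this.ne' h]
    refine Tendsto.congr' ?_ (show Tendsto (fun k : ℕ => 6 * ((k:ℝ) ^ 1 / 2 ^ k)) atTop (nhds 0) by
      simpa using
        (tendsto_pow_const_div_const_pow_of_one_lt 1 (by norm_num : (1:ℝ) < 2)).const_mul 6)
    filter_upwards [eventually_ge_atTop 1] with n hn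
    have hx : (1 : ℝ) ≤ (n : ℝ) := by exact_mod_cast hn
    have h2 : (0:ℝ) < (2:ℝ) ^ n := by positivity
    have h4 : (4:ℝ) ^ n = (2:ℝ) ^ n * (2:ℝ) ^ n := by rw [← mul_pow]; norm_num
    rw [h4]
    field_simp
  refine h1.trans_isBigO ?_
  rw [isBigO_iff]
  refine ⟨1, ?_⟩
  filter_upwards [eventually_ge_atTop 2] with n hn
  have hx : (2 : ℝ) ≤ (n : ℝ) := by exact_mod_cast hn
  have hle : (4 : ℝ) ^ n / (6 * (n : ℝ)) ≤ dfun n := by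
    rw [dfun_eq hn]
    rw [div_le_div_iff₀ (by positivity) (by nlinarith)]
    have h4 : (0:ℝ) < (4:ℝ) ^ n := by positivity
    nlinarith [mul_nonneg (mul_nonneg h4.le (by linarith : (0:ℝ) ≤ 6 * (n:ℝ)))
      (by linarith : (0:ℝ) ≤ 2 * (n:ℝ) - 3)]
  rw [Real.norm_eq_abs, Real.norm_eq_abs, abs_of_nonneg (by positivity),
    abs_of_nonneg ((by positivity : (0:ℝ) ≤ (4:ℝ) ^ n / (6 * (n:ℝ))).trans hle)]
  linarith

lemma sum_range_Tfun (X : ℕ) :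
    ∑ i ∈ range (X + 1), Tfun i = ∑ n ∈ Finset.Icc 1 X, Tfun n := by
  rw [Finset.sum_range_succ', Tfun_zero, add_zero, ← Finset.Ico_add_one_right_eq_Icc,
    Finset.sum_Ico_eq_sum_range]
  simp [add_comm]

lemma bfun_atTop : Tendsto bfun atTop atTop := by
  have base : Tendsto (fun X : ℕ => (2/3 : ℝ) * (2:ℝ) ^ X) atTop atTop :=
    (tendsto_pow_atTop_atTop_of_one_lt (by norm_num : (1:ℝ) < 2)).const_mul_atTop (by norm_num)
  apply tendsto_atTop_mono' atTop ?_ base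
  filter_upwards [eventually_ge_atTop 1] with X hX
  have hx : (1 : ℝ) ≤ (X : ℝ) := by exact_mod_cast hX
  have hX2 : (X : ℝ) ≤ (2:ℝ) ^ X := by
    exact_mod_cast (Nat.lt_two_pow_self (n := X)).le
  have h2 : (0:ℝ) < (2:ℝ) ^ X := by positivity
  have h4 : (4:ℝ) ^ X = (2:ℝ) ^ X * (2:ℝ) ^ X := by rw [← mul_pow]; norm_num
  unfold bfun
  rw [le_div_iff₀ (by linarith : (0:ℝ) < (X:ℝ)), h4]
  nlinarith

theorem even_length_orbit_sum_asymptotic :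
    Filter.Tendsto
      (fun X : ℕ =>
        (∑ n ∈ Finset.Icc 1 X,
            ((1 / ((2 * n : ℕ) : ℝ)) * ∑ d ∈ (2 * n).divisors,
              (ArithmeticFunction.moebius ((2 * n) / d) : ℝ) * ((2 : ℝ) ^ d - 1))) /
          ((2 / 3) * (4 : ℝ) ^ X / (X : ℝ)))
      Filter.atTop (nhds 1) := by
  have hTg : (fun n => Tfun n - gfun n) =O[atTop] (fun n : ℕ => (2:ℝ) ^ n) := by
    rw [isBigO_iff]
    refine ⟨2, ?_⟩
    filter_upwards [eventually_ge_atTop 1] with n hn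
    rw [Real.norm_eq_abs, Real.norm_eq_abs, abs_of_nonneg (by positivity : (0:ℝ) ≤ (2:ℝ)^n)]
    exact Tg_bound hn
  have hTd : (fun n => Tfun n - dfun n) =o[atTop] dfun := by
    have h1 : (fun n => Tfun n - gfun n) =o[atTop] dfun := hTg.trans_isLittleO two_pow_littleo
    have h2 := h1.add gd_littleo
    refine h2.congr' ?_ (by rfl)
    filter_upwards with n
    show Tfun n - gfun n + (gfun n - dfun n) = Tfun n - dfun n
    ring
  have htop : Tendsto (fun n => ∑ i ∈ range n, dfun i) atTop atTop := by
    refine Tendsto.congr (fun n => (sum_range_dfun n).symm)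
      (bfun_atTop.comp (tendsto_sub_atTop_nat 1))
  have hsum := hTd.sum_range dfun_nonneg htop
  have hcomp := hsum.comp_tendsto (tendsto_add_atTop_nat 1)
  have hL : (fun X : ℕ => ∑ i ∈ range (X + 1), (Tfun i - dfun i))
      = fun X : ℕ => (∑ n ∈ Finset.Icc 1 X, Tfun n) - bfun X := by
    funext X
    rw [Finset.sum_sub_distrib, sum_range_dfun, sum_range_Tfun]
    simp
  have hR : (fun X : ℕ => ∑ i ∈ range (X + 1), dfun i) = bfun := by
    funext X
    rw [sum_range_dfun]
    simp
  rw [show ((fun n => ∑ i ∈ range n, (Tfun i - dfun i)) ∘ fun n => n + 1)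
      = fun X : ℕ => ∑ i ∈ range (X + 1), (Tfun i - dfun i) from rfl,
    show ((fun n => ∑ i ∈ range n, dfun i) ∘ fun n => n + 1)
      = fun X : ℕ => ∑ i ∈ range (X + 1), dfun i from rfl, hL, hR] at hcomp
  have hequiv : (fun X : ℕ => ∑ n ∈ Finset.Icc 1 X, Tfun n) ~[atTop] bfun := hcomp
  have hz : ∀ᶠ X : ℕ in atTop, bfun X ≠ 0 := by
    filter_upwards [eventually_ge_atTop 1] with X hX
    have hx : (1 : ℝ) ≤ (X : ℝ) := by exact_mod_cast hX
    unfold bfun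
    positivity
  rw [isEquivalent_iff_tendsto_one hz] at hequiv
  exact hequiv
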